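/- For every integer p ≥ 1 and every n ≥ 1, the characteristic polynomial P_n of A_n factors as P_n = (X − 2p) · ∏_{i=0}^{n−1} (F_p^{∘i} + 2) · ∏_{i=0}^{n−1} (F_p^{∘i} − 2(p−1))^{(p−1)(p+1)^{n−i−1}}, where F_p = X² − 2(p−1)X − 2p ∈ ℝ[X] and F_p^{∘i} denotes the i-fold composition of F_p with itself (F_p^{∘0} = X). -/

import Mathlib

open Polynomial Matrix

/-- The action of the generator `e_i` of the star automaton group `𝒢_{S_p}` on
words of length `n` over the alphabet `X = {0, 1, …, p}`. -/
def starWord (p : ℕ) (i : Fin (p + 1)) : (n : ℕ) → (Fin n → Fin (p + 1)) → Fin n → Fin (p + 1)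
  | 0, w => w
  | n + 1, w =>
    if w 0 = 0 then Fin.cons i (starWord p i n (Fin.tail w))
    else if w 0 = i then Fin.cons 0 (Fin.tail w)
    else w

/-- The real permutation matrix of `e_i^{(n)}`. -/
noncomputable def starMat (p n : ℕ) (i : Fin (p + 1)) :
    Matrix (Fin n → Fin (p + 1)) (Fin n → Fin (p + 1)) ℝ :=
  fun u v => if starWord p i n u = v then 1 else 0

/-- The adjacency matrix `A_n = Σ_{i=1}^p (M_{i,n} + M_{i,n}ᵀ)` of the `n`-th
Schreier graph of the star automaton group `𝒢_{S_p}`. -/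
noncomputable def starAdj (p n : ℕ) :
    Matrix (Fin n → Fin (p + 1)) (Fin n → Fin (p + 1)) ℝ :=
  ∑ i : Fin p, (starMat p n i.succ + (starMat p n i.succ)ᵀ)

/-- The `i`-fold composition `F^{∘i}` of a polynomial with itself, with `F^{∘0} = X`. -/
noncomputable def polyIter (F : Polynomial ℝ) : ℕ → Polynomial ℝ
  | 0 => X
  | n + 1 => F.comp (polyIter F n)

/-- For every `p ≥ 1` and `n ≥ 1`, with `F_p = X² − 2(p−1)X − 2p`:
`P_n = (X − 2p) · ∏_{i=0}^{n−1} (F_p^{∘i} + 2) · ∏_{i=0}^{n−1} (F_p^{∘i} − 2(p−1))^{(p−1)(p+1)^{n−i−1}}`. -/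
lemma starWord_cons (p : ℕ) (i : Fin (p+1)) (n : ℕ) (x : Fin (p+1)) (u : Fin n → Fin (p+1)) :
    starWord p i (n+1) (Fin.cons x u) =
      if x = 0 then Fin.cons i (starWord p i n u)
      else if x = i then Fin.cons 0 u else Fin.cons x u := by
  simp [starWord, Fin.tail_cons]

lemma starWord_injective (p : ℕ) (i : Fin (p+1)) :
    ∀ n, Function.Injective (starWord p i n)
  | 0 => fun u v h => h
  | n + 1 => by
    intro u v h
    rw [← Fin.cons_self_tail u, ← Fin.cons_self_tail v] at h ⊢
    rw [starWord_cons, starWord_cons] at h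
    split_ifs at h with h1 h2 h3 h4 h5 h6 h7 h8 <;> rw [Fin.cons_inj] at h <;>
      first
        | exact Fin.cons_inj.2 ⟨by simp_all, starWord_injective p i n h.2⟩
        | exact Fin.cons_inj.2 ⟨by simp_all, h.2⟩
        | exact Fin.cons_inj.2 h
        | simp_all

lemma starMat_mul_transpose (p n : ℕ) (i : Fin (p+1)) :
    starMat p n i * (starMat p n i)ᵀ = 1 := by
  ext u v
  simp only [Matrix.mul_apply, starMat, Matrix.transpose_apply, Matrix.one_apply,
    ite_mul, one_mul, zero_mul]
  rw [Finset.sum_ite_eq Finset.univ (starWord p i n u)]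
  simp [(starWord_injective p i n).eq_iff, eq_comm]

def starEquiv (p n : ℕ) :
    (Fin (n+1) → Fin (p+1)) ≃ ((Fin n → Fin (p+1)) ⊕ (Fin p × (Fin n → Fin (p+1)))) where
  toFun w := if h : w 0 = 0 then Sum.inl (Fin.tail w) else Sum.inr ((w 0).pred h, Fin.tail w)
  invFun s := Sum.elim (fun u => Fin.cons 0 u) (fun x => Fin.cons x.1.succ x.2) s
  left_inv w := by
    by_cases h : w 0 = 0
    · simp only [h, dif_pos, Sum.elim_inl]
      rw [← h, Fin.cons_self_tail]
    · simp only [h, dif_neg, Sum.elim_inr, not_false_iff, Fin.succ_pred]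
      rw [Fin.cons_self_tail]
  right_inv s := by
    cases s with
    | inl u => simp
    | inr x => simp [Fin.succ_ne_zero]

noncomputable def starB (p n : ℕ) :
    Matrix (Fin n → Fin (p+1)) (Fin p × (Fin n → Fin (p+1))) ℝ :=
  fun u x => (starMat p n x.1.succ + 1) u x.2

lemma starEquiv_symm_inl (p n : ℕ) (u : Fin n → Fin (p+1)) :
    (starEquiv p n).symm (Sum.inl u) = Fin.cons 0 u := rfl

lemma starEquiv_symm_inr (p n : ℕ) (x : Fin p × (Fin n → Fin (p+1))) :
    (starEquiv p n).symm (Sum.inr x) = Fin.cons x.1.succ x.2 := rfl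

lemma starAdj_reindex (p n : ℕ) :
    reindex (starEquiv p n) (starEquiv p n) (starAdj p (n+1)) =
      fromBlocks 0 (starB p n) (starB p n)ᵀ ((2*((p:ℝ)-1)) • 1) := by
  ext x y
  rw [reindex_apply, submatrix_apply]
  cases x with
  | inl u =>
    cases y with
    | inl v =>
      rw [starEquiv_symm_inl, starEquiv_symm_inl, fromBlocks_apply₁₁]
      simp [starAdj, Matrix.sum_apply, starMat, starWord_cons, Fin.cons_inj,
        Fin.succ_ne_zero, (Fin.succ_ne_zero _).symm]
    | inr x =>
      obtain ⟨j, v⟩ := x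
      rw [starEquiv_symm_inl, starEquiv_symm_inr, fromBlocks_apply₁₂]
      rw [starAdj, Matrix.sum_apply]
      rw [Finset.sum_eq_single j]
      · simp [starMat, starWord_cons, Fin.cons_inj, Fin.succ_ne_zero,
          (Fin.succ_ne_zero _).symm, starB, eq_comm, Matrix.one_apply, Matrix.add_apply]
      · intro k _ hk
        have hk' : ¬ j = k := fun h => hk h.symm
        simp [starMat, starWord_cons, Fin.cons_inj, Fin.succ_ne_zero,
          (Fin.succ_ne_zero _).symm, Fin.succ_inj, hk, hk']
      · simp
  | inr x =>
    obtain ⟨i, u⟩ := x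
    cases y with
    | inl v =>
      rw [starEquiv_symm_inr, starEquiv_symm_inl, fromBlocks_apply₂₁, Matrix.transpose_apply]
      rw [starAdj, Matrix.sum_apply]
      rw [Finset.sum_eq_single i]
      · simp [starMat, starWord_cons, Fin.cons_inj, Fin.succ_ne_zero,
          (Fin.succ_ne_zero _).symm, starB, eq_comm, Matrix.one_apply, Matrix.add_apply,
          add_comm]
      · intro k _ hk
        have hk' : ¬ i = k := fun h => hk h.symm
        simp [starMat, starWord_cons, Fin.cons_inj, Fin.succ_ne_zero,
          (Fin.succ_ne_zero _).symm, Fin.succ_inj, hk, hk']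
      · simp
    | inr y =>
      obtain ⟨j, v⟩ := y
      rw [starEquiv_symm_inr, starEquiv_symm_inr, fromBlocks_apply₂₂]
      rw [starAdj, Matrix.sum_apply]
      by_cases hij : i = j ∧ u = v
      · obtain ⟨rfl, rfl⟩ := hij
        have hf : ∀ k ∈ Finset.univ, (starMat p (n+1) k.succ + (starMat p (n+1) k.succ)ᵀ)
            (Fin.cons i.succ u) (Fin.cons i.succ u) = 2 - (if k = i then 2 else 0) := by
          intro k _
          by_cases hk : k = i
          · subst hk
            simp [starMat, starWord_cons, Fin.cons_inj, Fin.succ_ne_zero,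
              (Fin.succ_ne_zero _).symm]
          · have hk' : ¬ i = k := fun h => hk h.symm
            simp [starMat, starWord_cons, Fin.cons_inj, Fin.succ_ne_zero,
              (Fin.succ_ne_zero _).symm, Fin.succ_inj, hk, hk']
            norm_num
        rw [Finset.sum_congr rfl hf, Finset.sum_sub_distrib, Finset.sum_const,
          Finset.sum_ite_eq' Finset.univ i (fun _ => (2:ℝ))]
        simp [Finset.card_univ, Matrix.one_apply, Matrix.smul_apply]
        ring
      · have hne : ¬ ((i, u) = (j, v)) := by
          simp only [Prod.mk.injEq]; exact hij
        rw [Matrix.smul_apply, Matrix.one_apply, if_neg hne, smul_zero]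
        apply Finset.sum_eq_zero
        intro k _
        by_cases h1 : i = k <;> by_cases h2 : j = k
        · simp [starMat, starWord_cons, Fin.cons_inj, Fin.succ_ne_zero,
            (Fin.succ_ne_zero _).symm, Fin.succ_inj, h1, h2]
        · simp [starMat, starWord_cons, Fin.cons_inj, Fin.succ_ne_zero,
            (Fin.succ_ne_zero _).symm, Fin.succ_inj, h1, h2]
        · simp [starMat, starWord_cons, Fin.cons_inj, Fin.succ_ne_zero,
            (Fin.succ_ne_zero _).symm, Fin.succ_inj, h1, h2]
        · rcases not_and_or.1 hij with h | h <;>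
          · simp [starMat, starWord_cons, Fin.cons_inj, Fin.succ_ne_zero,
              (Fin.succ_ne_zero _).symm, Fin.succ_inj, h1, h2, h]
            intro hji hvu
            exact h (by simp [hji, hvu])

lemma starB_mul_transpose (p n : ℕ) :
    starB p n * (starB p n)ᵀ = (2*(p:ℝ)) • 1 + starAdj p n := by
  have h1 : starB p n * (starB p n)ᵀ =
      ∑ i : Fin p, (starMat p n i.succ + 1) * (starMat p n i.succ + 1)ᵀ := by
    ext u v
    rw [Matrix.mul_apply, Matrix.sum_apply, Fintype.sum_prod_type]
    refine Finset.sum_congr rfl fun i _ => ?_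
    rw [Matrix.mul_apply]
    rfl
  rw [h1]
  have h2 : ∀ i : Fin p, (starMat p n i.succ + 1) * (starMat p n i.succ + 1)ᵀ =
      (2:ℝ) • 1 + (starMat p n i.succ + (starMat p n i.succ)ᵀ) := by
    intro i
    rw [Matrix.transpose_add, Matrix.transpose_one, add_mul, mul_add, mul_add,
      starMat_mul_transpose, Matrix.mul_one, Matrix.one_mul, Matrix.mul_one]
    rw [two_smul]
    abel
  rw [Finset.sum_congr rfl fun i _ => h2 i, Finset.sum_add_distrib, Finset.sum_const,
    Finset.card_univ, Fintype.card_fin, ← starAdj]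
  congr 1
  rw [← Nat.cast_smul_eq_nsmul ℝ p, smul_smul]
  congr 1
  ring

lemma map_smul_one {m : Type*} [Fintype m] [DecidableEq m] (r : ℝ) :
    ((r • (1 : Matrix m m ℝ)).map (C : ℝ →+* ℝ[X])) = (C r) • 1 := by
  ext i j
  by_cases h : i = j <;>
    simp [Matrix.map_apply, Matrix.smul_apply, Matrix.one_apply, h]

lemma charpoly_starAdj_succ (p n : ℕ) (hp : 1 ≤ p) :
    (starAdj p (n+1)).charpoly =
      ((starAdj p n).charpoly.comp (X^2 - C (2*((p:ℝ)-1))*X - C (2*(p:ℝ)))) *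
        (X - C (2*((p:ℝ)-1)))^((p-1) * (p+1)^n) := by
  set c : ℝ := 2*((p:ℝ)-1) with hc
  set F : ℝ[X] := X^2 - C c * X - C (2*(p:ℝ)) with hF
  set B := starB p n with hB
  rw [← Matrix.charpoly_reindex (starEquiv p n), starAdj_reindex]
  have hch0 : charmatrix (0 : Matrix (Fin n → Fin (p+1)) (Fin n → Fin (p+1)) ℝ)
      = (X : ℝ[X]) • 1 := by
    ext i j
    by_cases h : i = j
    · subst h; simp [charmatrix_apply_eq, Matrix.smul_apply, Matrix.one_apply]
    · simp [charmatrix_apply_ne _ _ _ h, Matrix.smul_apply, Matrix.one_apply, h]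
  have hchc : charmatrix (c • (1 : Matrix (Fin p × (Fin n → Fin (p+1))) _ ℝ))
      = ((X : ℝ[X]) - C c) • 1 := by
    ext i j
    by_cases h : i = j
    · subst h; simp [charmatrix_apply_eq, Matrix.smul_apply, Matrix.one_apply]
    · simp [charmatrix_apply_ne _ _ _ h, Matrix.smul_apply, Matrix.one_apply, h]
  -- the elementary block matrix E
  set E := fromBlocks
      (((X : ℝ[X]) - C c) • (1 : Matrix (Fin n → Fin (p+1)) (Fin n → Fin (p+1)) ℝ[X]))
      (0 : Matrix (Fin n → Fin (p+1)) (Fin p × (Fin n → Fin (p+1))) ℝ[X])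
      ((Bᵀ).map (C : ℝ →+* ℝ[X]))
      (1 : Matrix (Fin p × (Fin n → Fin (p+1))) (Fin p × (Fin n → Fin (p+1))) ℝ[X]) with hE
  have hscal : (X * (X - C c) : ℝ[X]) - C (2*(p:ℝ)) = F := by
    rw [hF]; ring
  have hkey : charmatrix (fromBlocks 0 B Bᵀ (c • 1)) * E =
      fromBlocks (F • 1 - (starAdj p n).map (C : ℝ →+* ℝ[X])) (-(B.map (C : ℝ →+* ℝ[X])))
        0 (((X : ℝ[X]) - C c) • 1) := by
    rw [charmatrix_fromBlocks, hch0, hchc, hE, fromBlocks_multiply,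
      Matrix.smul_mul, Matrix.one_mul, smul_smul, Matrix.neg_mul, ← Matrix.map_mul,
      starB_mul_transpose, Matrix.map_add, map_smul_one,
      neg_add, ← add_assoc, ← sub_eq_add_neg, ← sub_eq_add_neg, ← sub_smul, hscal]
    · simp [Matrix.mul_smul, Matrix.smul_mul]
    · exact fun a₁ a₂ => map_add C a₁ a₂
  have hcomp : (starAdj p n).charpoly.comp F =
      Matrix.det (F • 1 - (starAdj p n).map (C : ℝ →+* ℝ[X])) := by
    rw [comp_eq_aeval, Matrix.charpoly, AlgHom.map_det (aeval F)]
    congr 1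
    ext i j
    by_cases h : i = j
    · subst h
      simp [charmatrix_apply_eq, Matrix.smul_apply, Matrix.one_apply, Matrix.map_apply]
    · simp [charmatrix_apply_ne _ _ _ h, Matrix.smul_apply, Matrix.one_apply,
        Matrix.map_apply, h]
  have hdet := congrArg Matrix.det hkey
  rw [Matrix.det_mul, hE, Matrix.det_fromBlocks_zero₁₂, Matrix.det_fromBlocks_zero₂₁,
    Matrix.det_smul, Matrix.det_smul, Matrix.det_one, Matrix.det_one, ← hcomp] at hdet
  have hcardW : Fintype.card (Fin n → Fin (p+1)) = (p+1)^n := by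
    simp [Fintype.card_fun]
  have hcardP : Fintype.card (Fin p × (Fin n → Fin (p+1))) = p * (p+1)^n := by
    simp [Fintype.card_prod, Fintype.card_fun]
  rw [hcardW, hcardP] at hdet
  have hsplit : p * (p+1)^n = (p-1) * (p+1)^n + (p+1)^n := by
    have h1 : p - 1 + 1 = p := Nat.succ_pred_eq_of_pos hp
    calc p * (p+1)^n = (p - 1 + 1) * (p+1)^n := by rw [h1]
    _ = (p-1) * (p+1)^n + (p+1)^n := by ring
  rw [hsplit, pow_add] at hdet
  have hne : ((X : ℝ[X]) - C c) ^ (p+1)^n ≠ 0 := pow_ne_zero _ (X_sub_C_ne_zero c)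
  apply mul_right_cancel₀ hne
  rw [Matrix.charpoly]
  calc (charmatrix (fromBlocks 0 B Bᵀ (c • 1))).det * ((X : ℝ[X]) - C c) ^ (p+1)^n
      = (charmatrix (fromBlocks 0 B Bᵀ (c • 1))).det * (((X : ℝ[X]) - C c) ^ (p+1)^n * 1 * 1) := by
        ring
    _ = (starAdj p n).charpoly.comp F * (((X : ℝ[X]) - C c) ^ ((p-1) * (p+1)^n) * ((X : ℝ[X]) - C c) ^ (p+1)^n * 1) := hdet
    _ = (starAdj p n).charpoly.comp F * ((X : ℝ[X]) - C c) ^ ((p-1) * (p+1)^n) * ((X : ℝ[X]) - C c) ^ (p+1)^n := by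
        ring

lemma charpoly_starAdj_zero (p : ℕ) :
    (starAdj p 0).charpoly = X - C (2*(p:ℝ)) := by
  have h : ∀ i ∈ Finset.univ, (starMat p 0 (i : Fin p).succ + (starMat p 0 i.succ)ᵀ)
      (default : Fin 0 → Fin (p+1)) default = (2:ℝ) := by
    intro i _
    simp [starMat, starWord]
    norm_num
  have hA : ∀ u v : Fin 0 → Fin (p+1), starAdj p 0 u v = 2*(p:ℝ) := by
    intro u v
    have huv : u = v := Subsingleton.elim u v
    subst huv
    have hd : u = default := Subsingleton.elim _ _
    subst hd
    rw [starAdj, Matrix.sum_apply, Finset.sum_congr rfl h, Finset.sum_const,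
      Finset.card_univ, Fintype.card_fin, nsmul_eq_mul]
    ring
  rw [Matrix.charpoly, Matrix.det_unique, charmatrix_apply_eq, hA]

lemma polyIter_comp (F : ℝ[X]) : ∀ n, (polyIter F n).comp F = polyIter F (n+1)
  | 0 => by simp [polyIter]
  | n+1 => by
    rw [show polyIter F (n+1) = F.comp (polyIter F n) from rfl, Polynomial.comp_assoc,
      polyIter_comp F n]
    rfl

lemma charpoly_starAdj (p : ℕ) (hp : 1 ≤ p) (n : ℕ) :
    (starAdj p n).charpoly =
      (polyIter (X^2 - C (2*((p:ℝ)-1))*X - C (2*(p:ℝ))) n - C (2*(p:ℝ))) *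
        ∏ i ∈ Finset.range n,
          (polyIter (X^2 - C (2*((p:ℝ)-1))*X - C (2*(p:ℝ))) i - C (2*((p:ℝ)-1)))
            ^ ((p-1)*(p+1)^(n-i-1)) := by
  set F : ℝ[X] := X^2 - C (2*((p:ℝ)-1))*X - C (2*(p:ℝ)) with hF
  induction n with
  | zero => simp [polyIter, charpoly_starAdj_zero]
  | succ n ih =>
    rw [charpoly_starAdj_succ p n hp, ih, ← hF, mul_comp, sub_comp, C_comp, prod_comp,
      polyIter_comp]
    have hprod : ∀ i ∈ Finset.range n,
        ((polyIter F i - C (2*((p:ℝ)-1))) ^ ((p-1)*(p+1)^(n-i-1))).comp F =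
          (polyIter F (i+1) - C (2*((p:ℝ)-1))) ^ ((p-1)*(p+1)^(n+1-(i+1)-1)) := by
      intro i hi
      have he : n + 1 - (i+1) - 1 = n - i - 1 := by omega
      rw [pow_comp, sub_comp, C_comp, polyIter_comp, he]
    rw [Finset.prod_congr rfl hprod, Finset.prod_range_succ'
      (fun i => (polyIter F i - C (2*((p:ℝ)-1))) ^ ((p-1)*(p+1)^(n+1-i-1)))]
    have h0 : n + 1 - 0 - 1 = n := by omega
    simp only [polyIter, h0]
    ring

lemma polyIter_sub_factor (p : ℕ) : ∀ n,
    polyIter (X^2 - C (2*((p:ℝ)-1))*X - C (2*(p:ℝ))) n - C (2*(p:ℝ)) =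
      (X - C (2*(p:ℝ))) * ∏ i ∈ Finset.range n,
        (polyIter (X^2 - C (2*((p:ℝ)-1))*X - C (2*(p:ℝ))) i + C 2)
  | 0 => by simp [polyIter]
  | n+1 => by
    set F : ℝ[X] := X^2 - C (2*((p:ℝ)-1))*X - C (2*(p:ℝ)) with hF
    have hstep : polyIter F (n+1) - C (2*(p:ℝ)) =
        (polyIter F n - C (2*(p:ℝ))) * (polyIter F n + C 2) := by
      have h2 : (2*((p:ℝ)-1)) = 2*(p:ℝ) - 2 := by ring
      rw [show polyIter F (n+1) = F.comp (polyIter F n) from rfl, hF, sub_comp, sub_comp,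
        mul_comp, pow_comp, X_comp, C_comp, C_comp, h2]
      simp only [_root_.map_sub, _root_.map_mul, _root_.map_ofNat]
      ring
    rw [hstep, polyIter_sub_factor p n, Finset.prod_range_succ]
    ring

theorem stmt3 (p : ℕ) (hp : 1 ≤ p) (n : ℕ) (hn : 1 ≤ n) :
    (starAdj p n).charpoly =
      (X - C (2 * (p : ℝ))) *
        (∏ i ∈ Finset.range n,
          (polyIter (X ^ 2 - C (2 * ((p : ℝ) - 1)) * X - C (2 * (p : ℝ))) i + C 2)) *
        (∏ i ∈ Finset.range n,
          (polyIter (X ^ 2 - C (2 * ((p : ℝ) - 1)) * X - C (2 * (p : ℝ))) i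
              - C (2 * ((p : ℝ) - 1))) ^ ((p - 1) * (p + 1) ^ (n - i - 1))) := by
  rw [charpoly_starAdj p hp n, polyIter_sub_factor p n]
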